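/- Let n̄ = (n_1 ≤ ... ≤ n_m) with each row and column of Y_{n̄} containing a staircase corner (so m = n_m = #Sc_{n̄}), and let λ be a partition with l(λ) ≤ #Sc_{n̄}. For any two DL-dense arrays A, B of shape Y_{n̄} with multiset of nonzero entries λ, the Bruhat comparison of their horizontal weights is equivalent to that of their vertical weights: hor(A) ≤ hor(B) in the Bruhat order on S_{n_m}·λ if and only if vrt(A) ≤ vrt(B) in the Bruhat order on S_m·λ. -/
import Mathlib


/-- One step up in the Bruhat order on compositions: swap two entries in disorder. -/
def BruhatStep {m : ℕ} (d d' : Fin m → ℕ) : Prop :=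
  ∃ i j : Fin m, i < j ∧ d j < d i ∧ d' = d ∘ Equiv.swap i j

/-- The Bruhat partial order on (an `S_m`-orbit of) compositions: the reflexive
transitive closure of disorder swaps. -/
def BruhatLE {m : ℕ} : (Fin m → ℕ) → (Fin m → ℕ) → Prop :=
  Relation.ReflTransGen BruhatStep

namespace Stmt17

open Finset

variable {m : ℕ}

/-- prefix count: number of positions `j < k` with `d j ≥ t`. -/
def Nc (d : Fin m → ℕ) (t k : ℕ) : ℕ :=
  ∑ j : Fin m, if (j : ℕ) < k ∧ t ≤ d j then 1 else 0

lemma Nc_zero (d : Fin m → ℕ) (t : ℕ) : Nc d t 0 = 0 := by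
  unfold Nc
  exact Finset.sum_eq_zero fun j _ => by rw [if_neg]; rintro ⟨h, -⟩; omega

lemma Nc_stable (d : Fin m → ℕ) (t k : ℕ) (hk : m ≤ k) : Nc d t k = Nc d t m := by
  unfold Nc
  refine Finset.sum_congr rfl fun j _ => ?_
  have h1 : (j : ℕ) < k := lt_of_lt_of_le j.isLt hk
  have h2 : (j : ℕ) < m := j.isLt
  by_cases ht : t ≤ d j <;> simp [ht, h1, h2]

lemma Nc_total {d d' : Fin m → ℕ} (σ : Equiv.Perm (Fin m)) (hσ : d' = d ∘ σ) (t : ℕ) :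
    Nc d' t m = Nc d t m := by
  unfold Nc
  have h1 : ∀ (e : Fin m → ℕ), (∑ j : Fin m, if (j : ℕ) < m ∧ t ≤ e j then 1 else 0)
      = ∑ j : Fin m, if t ≤ e j then 1 else 0 := by
    intro e
    exact Finset.sum_congr rfl fun j _ => by rw [if_congr (and_iff_right j.isLt) rfl rfl]
  rw [h1, h1, hσ]
  exact Equiv.sum_comp σ (fun j => if t ≤ d j then 1 else 0)

lemma Nc_succ (d : Fin m → ℕ) (t k : ℕ) (hk : k < m) :
    Nc d t (k + 1) = Nc d t k + (if t ≤ d ⟨k, hk⟩ then 1 else 0) := by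
  unfold Nc
  have step1 : (∑ j : Fin m, if (j : ℕ) < k + 1 ∧ t ≤ d j then 1 else 0)
      = ∑ j : Fin m, ((if (j : ℕ) < k ∧ t ≤ d j then 1 else 0)
          + (if (j : ℕ) = k ∧ t ≤ d j then 1 else 0)) := by
    refine Finset.sum_congr rfl fun j _ => ?_
    by_cases ht : t ≤ d j
    · simp only [ht, and_true]; split_ifs <;> omega
    · simp [ht]
  rw [step1, Finset.sum_add_distrib]
  congr 1
  rw [Finset.sum_eq_single (⟨k, hk⟩ : Fin m)]
  · simp
  · intro b _ hb
    rw [if_neg]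
    rintro ⟨h1, -⟩
    exact hb (Fin.ext h1)
  · intro h; exact absurd (Finset.mem_univ _) h

lemma Nc_succ' (d : Fin m → ℕ) (t k : ℕ) (hk : ¬ k < m) : Nc d t (k + 1) = Nc d t k := by
  rw [Nc_stable d t (k+1) (by omega), Nc_stable d t k (by omega)]

/-- two sums differing only at two points -/
lemma sum_pair_congr {f g : Fin m → ℕ} {x y : Fin m} (hxy : x ≠ y)
    (h : ∀ j, j ≠ x → j ≠ y → f j = g j) :
    f x + f y + ∑ j, g j = g x + g y + ∑ j, f j := by
  classical
  have hy : y ∈ (Finset.univ : Finset (Fin m)).erase x :=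
    Finset.mem_erase.2 ⟨hxy.symm, Finset.mem_univ _⟩
  have hsplit : ∀ F : Fin m → ℕ,
      (∑ j, F j) = (∑ j ∈ ((Finset.univ : Finset (Fin m)).erase x).erase y, F j) + F y + F x := by
    intro F
    rw [← Finset.sum_erase_add _ _ (Finset.mem_univ x), ← Finset.sum_erase_add _ _ hy]
  have hrest : (∑ j ∈ ((Finset.univ : Finset (Fin m)).erase x).erase y, f j)
      = ∑ j ∈ ((Finset.univ : Finset (Fin m)).erase x).erase y, g j := by
    refine Finset.sum_congr rfl fun j hj => ?_
    have h1 := Finset.mem_erase.1 hj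
    have h2 := Finset.mem_erase.1 h1.2
    exact h j h2.1 h1.1
  rw [hsplit f, hsplit g, hrest]
  omega

lemma Nc_comp_swap (d : Fin m → ℕ) (x y : Fin m) (t k : ℕ) :
    Nc (d ∘ Equiv.swap x y) t k
      = ∑ j : Fin m, if ((Equiv.swap x y j : Fin m) : ℕ) < k ∧ t ≤ d j then 1 else 0 := by
  unfold Nc
  refine (Fintype.sum_equiv (Equiv.swap x y)
    (fun j => if ((Equiv.swap x y j : Fin m) : ℕ) < k ∧ t ≤ d j then 1 else 0)
    (fun j => if (j : ℕ) < k ∧ t ≤ (d ∘ Equiv.swap x y) j then 1 else 0) ?_).symm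
  intro j
  simp [Equiv.swap_apply_self]

lemma Nc_swap_formula (d : Fin m → ℕ) (x y : Fin m) (hxy : x ≠ y) (t k : ℕ) :
    Nc (d ∘ Equiv.swap x y) t k
        + ((if (x : ℕ) < k ∧ t ≤ d x then 1 else 0) + (if (y : ℕ) < k ∧ t ≤ d y then 1 else 0))
      = Nc d t k
        + ((if (y : ℕ) < k ∧ t ≤ d x then 1 else 0) + (if (x : ℕ) < k ∧ t ≤ d y then 1 else 0)) := by
  rw [Nc_comp_swap]
  have key := sum_pair_congr (m := m) hxy
    (f := fun j => if ((Equiv.swap x y j : Fin m) : ℕ) < k ∧ t ≤ d j then 1 else 0)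
    (g := fun j => if (j : ℕ) < k ∧ t ≤ d j then 1 else 0)
    (fun j hjx hjy => by
      show (if ((Equiv.swap x y j : Fin m) : ℕ) < k ∧ t ≤ d j then 1 else 0)
          = (if (j : ℕ) < k ∧ t ≤ d j then 1 else 0)
      rw [Equiv.swap_apply_of_ne_of_ne hjx hjy])
  simp only [Equiv.swap_apply_left, Equiv.swap_apply_right] at key
  unfold Nc
  omega



lemma bruhatLE_nc {d d' : Fin m → ℕ} (h : BruhatLE d d') (t k : ℕ) :
    Nc d' t k ≤ Nc d t k := by
  induction h with
  | refl => exact le_rfl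
  | @tail e f hab hstep ih =>
    obtain ⟨x, y, hlt, hd, rfl⟩ := hstep
    refine le_trans ?_ ih
    have hxy : (x : ℕ) < (y : ℕ) := hlt
    have form := Nc_swap_formula e x y (Fin.ne_of_lt hlt) t k
    split_ifs at form <;> omega

lemma nc_eq_of_all_eq {d d' : Fin m → ℕ} (h : ∀ t k, Nc d' t k = Nc d t k) : d = d' := by
  funext j
  have key : ∀ t, (t ≤ d j ↔ t ≤ d' j) := by
    intro t
    have h1 := Nc_succ d t (j : ℕ) j.isLt
    have h2 := Nc_succ d' t (j : ℕ) j.isLt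
    have e1 := h t (j : ℕ)
    have e2 := h t ((j : ℕ) + 1)
    have hj : (⟨(j : ℕ), j.isLt⟩ : Fin m) = j := Fin.eta j j.isLt
    rw [hj] at h1 h2
    constructor <;> intro hle <;> by_contra hc <;> simp [hle, hc] at h1 h2 <;> omega
  have h1 := (key (d j)).1 le_rfl
  have h2 := (key (d' j)).2 le_rfl
  omega

/-- extract an "increase" position: equality at x, strictness at x+1. -/
lemma inc_extract {d d' : Fin m → ℕ} (hN : ∀ t k, Nc d' t k ≤ Nc d t k)
    (t x : ℕ) (hx : x < m) (h0 : ¬ Nc d' t x < Nc d t x) (h1 : Nc d' t (x+1) < Nc d t (x+1)) :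
    d' ⟨x, hx⟩ < t ∧ t ≤ d ⟨x, hx⟩ := by
  have e1 := Nc_succ d t x hx
  have e2 := Nc_succ d' t x hx
  have h2 := hN t x
  constructor
  · by_contra hc; push_neg at hc; rw [if_pos hc] at e2; split_ifs at e1 <;> omega
  · by_contra hc; rw [if_neg hc] at e1; split_ifs at e2 <;> omega

/-- extract a "decrease" position: strictness at y, equality at y+1. -/
lemma dec_extract {d d' : Fin m → ℕ} (hN : ∀ t k, Nc d' t k ≤ Nc d t k)
    (t y : ℕ) (hy : y < m) (h0 : Nc d' t y < Nc d t y) (h1 : ¬ Nc d' t (y+1) < Nc d t (y+1)) :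
    d ⟨y, hy⟩ < t ∧ t ≤ d' ⟨y, hy⟩ := by
  have e1 := Nc_succ d t y hy
  have e2 := Nc_succ d' t y hy
  have h2 := hN t (y+1)
  constructor
  · by_contra hc; push_neg at hc; rw [if_pos hc] at e1; split_ifs at e2 <;> omega
  · by_contra hc; rw [if_neg hc] at e2; split_ifs at e1 <;> omega

lemma nc_bruhatLE {d d' : Fin m → ℕ} (hσex : ∃ σ : Equiv.Perm (Fin m), d' = d ∘ σ)
    (hNall : ∀ t k, Nc d' t k ≤ Nc d t k) : BruhatLE d d' := by
  classical
  suffices H : ∀ n (d : Fin m → ℕ), (∑ j : Fin m, (m - (j : ℕ)) * d j) ≤ n →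
      (∃ σ : Equiv.Perm (Fin m), d' = d ∘ σ) → (∀ t k, Nc d' t k ≤ Nc d t k) →
      BruhatLE d d' by
    exact H _ d le_rfl hσex hNall
  intro n
  induction n using Nat.strong_induction_on with
  | _ n ih =>
  intro d hPhi hσ hN
  by_cases hdd' : d = d'
  · exact hdd' ▸ Relation.ReflTransGen.refl
  · have hex : ∃ t k, Nc d' t k < Nc d t k := by
      by_contra hno
      push_neg at hno
      exact hdd' (nc_eq_of_all_eq fun t k => le_antisymm (hN t k) (hno t k))
    obtain ⟨σ0, hσ0⟩ := hσ
    have hNm : ∀ t, Nc d' t m = Nc d t m := fun t => Nc_total σ0 hσ0 t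
    have hstable : ∀ t k, m ≤ k → ¬ Nc d' t k < Nc d t k := by
      intro t k hk
      rw [Nc_stable d' t k hk, Nc_stable d t k hk, hNm t]
      omega
    have subright : ∀ t x, Nc d' t (x+1) < Nc d t (x+1) →
        ∃ y, ∃ hy : y < m, x < y ∧ (∀ k, x < k → k ≤ y → Nc d' t k < Nc d t k)
          ∧ (d ⟨y, hy⟩ < t ∧ t ≤ d' ⟨y, hy⟩)
          ∧ (∀ k0, x < k0 → ¬ Nc d' t k0 < Nc d t k0 → y < k0) := by
      intro t x hx1
      have hxm : x + 1 < m := by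
        by_contra hc
        exact hstable t (x+1) (by omega) hx1
      have hEx : ∃ k, x < k ∧ ¬ Nc d' t k < Nc d t k :=
        ⟨m, by omega, hstable t m le_rfl⟩
      have hy'spec := Nat.find_spec hEx
      have hy'le : Nat.find hEx ≤ m := Nat.find_min' hEx ⟨by omega, hstable t m le_rfl⟩
      set y' := Nat.find hEx with hy'def
      have hy'2 : x + 2 ≤ y' := by
        rcases Nat.lt_or_ge (x+1) y' with h | h
        · omega
        · have hgt : x < y' := hy'spec.1
          have : y' = x + 1 := by omega
          rw [this] at hy'spec
          exact absurd hx1 hy'spec.2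
      have hzone : ∀ k, x < k → k ≤ y' - 1 → Nc d' t k < Nc d t k := by
        intro k hk1 hk2
        have h := Nat.find_min hEx (show k < y' by omega)
        by_contra hc
        exact h ⟨hk1, hc⟩
      have hS : Nc d' t (y'-1) < Nc d t (y'-1) := hzone (y'-1) (by omega) le_rfl
      have hNS : ¬ Nc d' t ((y'-1)+1) < Nc d t ((y'-1)+1) := by
        have hEq : (y'-1)+1 = y' := by omega
        rw [hEq]
        exact hy'spec.2
      refine ⟨y' - 1, by omega, by omega, hzone, dec_extract hN t (y'-1) (by omega) hS hNS, ?_⟩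
      intro k0 hk01 hk02
      have := Nat.find_min' hEx ⟨hk01, hk02⟩
      omega
    obtain ⟨t0, k0, hst0⟩ := hex
    have hk0m : ∃ k, k ≤ m ∧ Nc d' t0 k < Nc d t0 k := by
      rcases le_or_gt k0 m with h | h
      · exact ⟨k0, h, hst0⟩
      · refine ⟨m, le_rfl, ?_⟩
        rw [← Nc_stable d' t0 k0 (by omega), ← Nc_stable d t0 k0 (by omega)]
        exact hst0
    obtain ⟨k1, hk1m, hst1⟩ := hk0m
    have harc_ex : ∃ x y t, ∃ (hx : x < m) (hy : y < m), x < y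
        ∧ (d' ⟨x, hx⟩ < t ∧ t ≤ d ⟨x, hx⟩)
        ∧ (d ⟨y, hy⟩ < t ∧ t ≤ d' ⟨y, hy⟩)
        ∧ ∀ k, x < k → k ≤ y → Nc d' t k < Nc d t k := by
      have hP0 : ¬ Nc d' t0 0 < Nc d t0 0 := by rw [Nc_zero, Nc_zero]; omega
      have hxspec : ¬ Nc d' t0 (Nat.findGreatest (fun k => ¬ Nc d' t0 k < Nc d t0 k) (k1 - 1))
          < Nc d t0 (Nat.findGreatest (fun k => ¬ Nc d' t0 k < Nc d t0 k) (k1 - 1)) :=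
        @Nat.findGreatest_spec 0 (fun k => ¬ Nc d' t0 k < Nc d t0 k) _ (k1 - 1) (Nat.zero_le _) hP0
      set x := Nat.findGreatest (fun k => ¬ Nc d' t0 k < Nc d t0 k) (k1 - 1) with hxdef
      have hxle : x ≤ k1 - 1 := Nat.findGreatest_le _
      have hk1pos : 1 ≤ k1 := by
        by_contra hc
        have h0 : k1 = 0 := by omega
        rw [h0] at hst1
        exact hP0 hst1
      have hxk1 : x < k1 := by omega
      have hzone : ∀ k, x < k → k ≤ k1 → Nc d' t0 k < Nc d t0 k := by
        intro k hka hkb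
        rcases eq_or_lt_of_le hkb with rfl | hlt
        · exact hst1
        · by_contra hc
          have := @Nat.le_findGreatest k (fun k => ¬ Nc d' t0 k < Nc d t0 k) _ (k1 - 1)
            (show k ≤ k1 - 1 by omega) hc
          omega
      have hxm : x < m := by omega
      have hsx1 : Nc d' t0 (x+1) < Nc d t0 (x+1) := hzone (x+1) (by omega) (by omega)
      obtain ⟨y, hy, hxy, hzone2, hdec, hmin⟩ := subright t0 x hsx1
      exact ⟨x, y, t0, hxm, hy, hxy, inc_extract hN t0 x hxm hxspec hsx1, hdec, hzone2⟩
    have hSne : Set.Nonempty {nn : ℕ | ∃ x y t, (∃ (hx : x < m) (hy : y < m), x < y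
        ∧ (d' ⟨x, hx⟩ < t ∧ t ≤ d ⟨x, hx⟩)
        ∧ (d ⟨y, hy⟩ < t ∧ t ≤ d' ⟨y, hy⟩)
        ∧ ∀ k, x < k → k ≤ y → Nc d' t k < Nc d t k) ∧ nn = y - x} := by
      obtain ⟨x, y, t, h⟩ := harc_ex
      exact ⟨y - x, x, y, t, h, rfl⟩
    obtain ⟨x, y, tt, harc, hn0⟩ := Nat.sInf_mem hSne
    obtain ⟨hx, hy, hxy, ⟨hinc1, hinc2⟩, ⟨hdec1, hdec2⟩, hzone⟩ := harc
    have hvalid : ∀ t k, d ⟨y, hy⟩ < t → t ≤ d ⟨x, hx⟩ → x < k → k ≤ y →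
        Nc d' t k < Nc d t k := by
      by_contra hcon
      push_neg at hcon
      obtain ⟨t', k', h1, h2, h3, h4, h5⟩ := hcon
      have hne : t' ≠ tt := by
        intro he
        have h6 := hzone k' h3 h4
        rw [he] at h5
        omega
      rcases Nat.lt_or_ge t' tt with hlt | hge
      · have hsty : Nc d' t' y < Nc d t' y := by
          have e1 := Nc_succ d t' y hy
          have e2 := Nc_succ d' t' y hy
          have h6 := hN t' (y+1)
          rw [if_neg (show ¬ t' ≤ d ⟨y, hy⟩ by omega)] at e1
          rw [if_pos (show t' ≤ d' ⟨y, hy⟩ by omega)] at e2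
          omega
        have hk'y : k' < y := by
          rcases eq_or_lt_of_le h4 with rfl | h
          · omega
          · exact h
        have hP0' : ¬ Nc d' t' 0 < Nc d t' 0 := by rw [Nc_zero, Nc_zero]; omega
        have hx₂spec : ¬ Nc d' t' (Nat.findGreatest (fun k => ¬ Nc d' t' k < Nc d t' k) (y - 1))
            < Nc d t' (Nat.findGreatest (fun k => ¬ Nc d' t' k < Nc d t' k) (y - 1)) :=
          @Nat.findGreatest_spec 0 (fun k => ¬ Nc d' t' k < Nc d t' k) _ (y - 1) (Nat.zero_le _) hP0'
        set x₂ := Nat.findGreatest (fun k => ¬ Nc d' t' k < Nc d t' k) (y - 1) with hx₂def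
        have hx₂k' : k' ≤ x₂ := @Nat.le_findGreatest k' (fun k => ¬ Nc d' t' k < Nc d t' k) _ (y - 1)
          (by omega) (by omega)
        have hx₂le : x₂ ≤ y - 1 := Nat.findGreatest_le _
        have hzone₂ : ∀ k, x₂ < k → k ≤ y → Nc d' t' k < Nc d t' k := by
          intro k hkl hkr
          rcases eq_or_lt_of_le hkr with rfl | hklt
          · exact hsty
          · by_contra hc
            have := @Nat.le_findGreatest k (fun k => ¬ Nc d' t' k < Nc d t' k) _ (y - 1)
              (show k ≤ y - 1 by omega) hc
            omega
        have hx₂m : x₂ < m := by omega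
        have hinc₂ := inc_extract hN t' x₂ hx₂m hx₂spec (hzone₂ (x₂+1) (by omega) (by omega))
        have hmem : y - x₂ ∈ {nn : ℕ | ∃ x y t, (∃ (hx : x < m) (hy : y < m), x < y
            ∧ (d' ⟨x, hx⟩ < t ∧ t ≤ d ⟨x, hx⟩)
            ∧ (d ⟨y, hy⟩ < t ∧ t ≤ d' ⟨y, hy⟩)
            ∧ ∀ k, x < k → k ≤ y → Nc d' t k < Nc d t k) ∧ nn = y - x} :=
          ⟨x₂, y, t', ⟨hx₂m, hy, by omega, hinc₂, ⟨h1, by omega⟩, hzone₂⟩, rfl⟩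
        have := Nat.sInf_le hmem
        omega
      · have hgt : tt < t' := by omega
        have hstx1 : Nc d' t' (x+1) < Nc d t' (x+1) := by
          have e1 := Nc_succ d t' x hx
          have e2 := Nc_succ d' t' x hx
          have h6 := hN t' x
          rw [if_pos h2] at e1
          rw [if_neg (show ¬ t' ≤ d' ⟨x, hx⟩ by omega)] at e2
          omega
        obtain ⟨y₂, hy₂, hxy₂, hzone₂, hdec₂, hmin₂⟩ := subright t' x hstx1
        have hy₂k' : y₂ < k' := hmin₂ k' h3 (by omega)
        have hmem : y₂ - x ∈ {nn : ℕ | ∃ x y t, (∃ (hx : x < m) (hy : y < m), x < y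
            ∧ (d' ⟨x, hx⟩ < t ∧ t ≤ d ⟨x, hx⟩)
            ∧ (d ⟨y, hy⟩ < t ∧ t ≤ d' ⟨y, hy⟩)
            ∧ ∀ k, x < k → k ≤ y → Nc d' t k < Nc d t k) ∧ nn = y - x} :=
          ⟨x, y₂, t', ⟨hx, hy₂, hxy₂, ⟨by omega, h2⟩, hdec₂, hzone₂⟩, rfl⟩
        have := Nat.sInf_le hmem
        omega
    set X : Fin m := ⟨x, hx⟩ with hXdef
    set Y : Fin m := ⟨y, hy⟩ with hYdef
    have hXv : (X : ℕ) = x := rfl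
    have hYv : (Y : ℕ) = y := rfl
    have hXY : X ≠ Y := by
      rw [Fin.ne_iff_vne, hXv, hYv]
      omega
    have hdXY : d Y < d X := by omega
    have hstep : BruhatStep d (d ∘ Equiv.swap X Y) :=
      ⟨X, Y, by rw [Fin.lt_def, hXv, hYv]; omega, hdXY, rfl⟩
    have hσ'' : ∃ σ' : Equiv.Perm (Fin m), d' = (d ∘ Equiv.swap X Y) ∘ σ' := by
      refine ⟨σ0.trans (Equiv.swap X Y), ?_⟩
      funext j
      simp [hσ0, Function.comp, Equiv.swap_apply_self]
    have hN'' : ∀ t k, Nc d' t k ≤ Nc (d ∘ Equiv.swap X Y) t k := by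
      intro t k
      have form := Nc_swap_formula d X Y hXY t k
      rw [hXv, hYv] at form
      by_cases hz : x < k ∧ k ≤ y ∧ d Y < t ∧ t ≤ d X
      · have hst := hvalid t k hz.2.2.1 hz.2.2.2 hz.1 hz.2.1
        split_ifs at form <;> omega
      · have h6 := hN t k
        split_ifs at form <;> omega
    have hphi : (∑ j : Fin m, (m - (j : ℕ)) * (d ∘ Equiv.swap X Y) j)
        < ∑ j : Fin m, (m - (j : ℕ)) * d j := by
      have hre : (∑ j : Fin m, (m - (j : ℕ)) * (d ∘ Equiv.swap X Y) j)
          = ∑ j : Fin m, (m - ((Equiv.swap X Y j : Fin m) : ℕ)) * d j := by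
        refine (Fintype.sum_equiv (Equiv.swap X Y)
          (fun j => (m - ((Equiv.swap X Y j : Fin m) : ℕ)) * d j)
          (fun j => (m - (j : ℕ)) * (d ∘ Equiv.swap X Y) j) ?_).symm
        intro j
        simp [Equiv.swap_apply_self]
      rw [hre]
      have key := sum_pair_congr (m := m) (x := X) (y := Y) hXY
        (f := fun j => (m - ((Equiv.swap X Y j : Fin m) : ℕ)) * d j)
        (g := fun j => (m - (j : ℕ)) * d j)
        (fun j hjx hjy => by
          show (m - ((Equiv.swap X Y j : Fin m) : ℕ)) * d j = (m - (j : ℕ)) * d j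
          rw [Equiv.swap_apply_of_ne_of_ne hjx hjy])
      simp only [Equiv.swap_apply_left, Equiv.swap_apply_right] at key
      have hprod : (m - (Y : ℕ)) * d X + (m - (X : ℕ)) * d Y
          < (m - (X : ℕ)) * d X + (m - (Y : ℕ)) * d Y := by
        obtain ⟨c, hc⟩ : ∃ c, (m - (X : ℕ)) = (m - (Y : ℕ)) + c + 1 :=
          ⟨(m - x) - (m - y) - 1, by rw [hXv, hYv]; omega⟩
        rw [hc]
        have h2 : (c + 1) * d Y < (c + 1) * d X :=
          mul_lt_mul_of_pos_left hdXY (by omega)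
        nlinarith [h2]
      linarith [key, hprod]
    exact Relation.ReflTransGen.head hstep (ih _ (by omega) _ le_rfl hσ'' hN'')

/-- Core counting lemma: for an injective `p : [0,m) → [0,m)` and `u v : ℕ → Bool`
with `v` up-closed for the order `i ⪰ j ↔ i ≤ j ∧ p j ≤ p i`, domination of column
prefix counts (with slack `δ`) implies domination of row prefix counts. -/
lemma core : ∀ (m : ℕ) (p : ℕ → ℕ) (u v : ℕ → Bool) (δ : ℕ),
    (∀ j, j < m → p j < m) →
    (∀ i j, i < m → j < m → p i = p j → i = j) →
    (∀ i j, i ≤ j → j < m → p j ≤ p i → v j = true → v i = true) →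
    (∀ k, (∑ j ∈ Finset.range m, if j < k ∧ v j = true then 1 else 0)
        ≤ (∑ j ∈ Finset.range m, if j < k ∧ u j = true then 1 else 0) + δ) →
    ∀ K, (∑ j ∈ Finset.range m, if p j < K ∧ v j = true then 1 else 0)
        ≤ (∑ j ∈ Finset.range m, if p j < K ∧ u j = true then 1 else 0) + δ := by
  intro m
  induction m with
  | zero => intro p u v δ _ _ _ _ K; simp
  | succ m IH =>
    intro p u v δ hmap hinj hup hcol K
    have hsm : p 0 < m + 1 := hmap 0 (by omega)
    have hps : ∀ j, j < m → p (j + 1) ≠ p 0 := by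
      intro j hj hne
      have := hinj (j+1) 0 (by omega) (by omega) hne
      omega
    -- column peeling
    have hC : ∀ (w : ℕ → Bool) (k : ℕ),
        (∑ j ∈ Finset.range (m+1), if j < k + 1 ∧ w j = true then 1 else 0)
          = (∑ j ∈ Finset.range m, if j < k ∧ w (j+1) = true then 1 else 0)
            + (if w 0 = true then 1 else 0) := by
      intro w k
      rw [Finset.sum_range_succ']
      congr 1
      · refine Finset.sum_congr rfl fun j _ => ?_
        have hiff : (j + 1 < k + 1 ∧ w (j+1) = true) ↔ (j < k ∧ w (j+1) = true) := by
          constructor <;> rintro ⟨ha, hb⟩ <;> exact ⟨by omega, hb⟩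
        exact if_congr hiff rfl rfl
      · have : (0 < k + 1 ∧ w 0 = true) ↔ (w 0 = true) := by
          constructor
          · rintro ⟨-, hb⟩; exact hb
          · intro hb; exact ⟨by omega, hb⟩
        exact if_congr this rfl rfl
    -- row peeling, low K
    have hRlow : ∀ (w : ℕ → Bool) (K : ℕ), K ≤ p 0 →
        (∑ j ∈ Finset.range (m+1), if p j < K ∧ w j = true then 1 else 0)
          = ∑ j ∈ Finset.range m,
              if (if p (j+1) < p 0 then p (j+1) else p (j+1) - 1) < K ∧ w (j+1) = true
              then 1 else 0 := by
      intro w K hK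
      rw [Finset.sum_range_succ']
      have h0 : (if p 0 < K ∧ w 0 = true then 1 else 0) = 0 := by
        rw [if_neg]; rintro ⟨ha, -⟩; omega
      rw [h0, add_zero]
      refine Finset.sum_congr rfl fun j hj => ?_
      have hj' : j < m := Finset.mem_range.1 hj
      have h1 := hps j hj'
      have hiff : (p (j+1) < K ∧ w (j+1) = true)
          ↔ ((if p (j+1) < p 0 then p (j+1) else p (j+1) - 1) < K ∧ w (j+1) = true) := by
        by_cases hc : p (j+1) < p 0
        · rw [if_pos hc]
        · rw [if_neg hc]
          constructor <;> rintro ⟨ha, hb⟩ <;> exact ⟨by omega, hb⟩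
      exact if_congr hiff rfl rfl
    -- row peeling, high K
    have hRhigh : ∀ (w : ℕ → Bool) (K : ℕ), p 0 < K →
        (∑ j ∈ Finset.range (m+1), if p j < K ∧ w j = true then 1 else 0)
          = (∑ j ∈ Finset.range m,
              if (if p (j+1) < p 0 then p (j+1) else p (j+1) - 1) < K - 1 ∧ w (j+1) = true
              then 1 else 0) + (if w 0 = true then 1 else 0) := by
      intro w K hK
      rw [Finset.sum_range_succ']
      congr 1
      · refine Finset.sum_congr rfl fun j hj => ?_
        have hj' : j < m := Finset.mem_range.1 hj
        have h1 := hps j hj'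
        have hiff : (p (j+1) < K ∧ w (j+1) = true)
            ↔ ((if p (j+1) < p 0 then p (j+1) else p (j+1) - 1) < K - 1 ∧ w (j+1) = true) := by
          by_cases hc : p (j+1) < p 0
          · rw [if_pos hc]
            constructor <;> rintro ⟨ha, hb⟩ <;> exact ⟨by omega, hb⟩
          · rw [if_neg hc]
            constructor <;> rintro ⟨ha, hb⟩ <;> exact ⟨by omega, hb⟩
        exact if_congr hiff rfl rfl
      · have : (p 0 < K ∧ w 0 = true) ↔ (w 0 = true) := by
          constructor
          · rintro ⟨-, hb⟩; exact hb
          · intro hb; exact ⟨hK, hb⟩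
        exact if_congr this rfl rfl
    -- slack at position 0
    have hδ1 : (if v 0 = true then 1 else 0) ≤ (if u 0 = true then 1 else 0) + δ := by
      have h1 := hcol 1
      rw [hC v 0, hC u 0] at h1
      have hz : ∀ (w : ℕ → Bool), (∑ j ∈ Finset.range m, if j < 0 ∧ w (j+1) = true then 1 else 0) = 0 :=
        fun w => Finset.sum_eq_zero fun j _ => by rw [if_neg]; rintro ⟨ha, -⟩; omega
      rw [hz v, hz u] at h1
      omega
    -- primed instance
    have hmap' : ∀ j, j < m → (if p (j+1) < p 0 then p (j+1) else p (j+1) - 1) < m := by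
      intro j hj
      have h1 := hps j hj
      have h2 := hmap (j+1) (by omega)
      split_ifs <;> omega
    have hinj' : ∀ i j, i < m → j < m →
        (if p (i+1) < p 0 then p (i+1) else p (i+1) - 1)
          = (if p (j+1) < p 0 then p (j+1) else p (j+1) - 1) → i = j := by
      intro i j hi hj hpe
      have h1 := hps i hi
      have h2 := hps j hj
      have h3 := hmap (i+1) (by omega)
      have h4 := hmap (j+1) (by omega)
      have h5 : p (i+1) = p (j+1) := by split_ifs at hpe <;> omega
      have := hinj (i+1) (j+1) (by omega) (by omega) h5
      omega
    have hup' : ∀ i j, i ≤ j → j < m →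
        (if p (j+1) < p 0 then p (j+1) else p (j+1) - 1)
          ≤ (if p (i+1) < p 0 then p (i+1) else p (i+1) - 1) →
        v (j+1) = true → v (i+1) = true := by
      intro i j hij hj hpe hv
      have h1 := hps i (by omega)
      have h2 := hps j hj
      have hle : p (j+1) ≤ p (i+1) := by split_ifs at hpe <;> omega
      exact hup (i+1) (j+1) (by omega) (by omega) hle hv
    have hcol' : ∀ k, (∑ j ∈ Finset.range m, if j < k ∧ v (j+1) = true then 1 else 0)
        ≤ (∑ j ∈ Finset.range m, if j < k ∧ u (j+1) = true then 1 else 0)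
          + ((if u 0 = true then 1 else 0) + δ - (if v 0 = true then 1 else 0)) := by
      intro k
      have h1 := hcol (k+1)
      rw [hC v k, hC u k] at h1
      omega
    have IHres : ∀ K', (∑ j ∈ Finset.range m,
          if (if p (j+1) < p 0 then p (j+1) else p (j+1) - 1) < K' ∧ v (j+1) = true
          then 1 else 0)
        ≤ (∑ j ∈ Finset.range m,
          if (if p (j+1) < p 0 then p (j+1) else p (j+1) - 1) < K' ∧ u (j+1) = true
          then 1 else 0)
          + ((if u 0 = true then 1 else 0) + δ - (if v 0 = true then 1 else 0)) :=
      IH (fun j => if p (j+1) < p 0 then p (j+1) else p (j+1) - 1)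
        (fun j => u (j+1)) (fun j => v (j+1)) _ hmap' hinj' hup' hcol'
    -- conclusion
    rcases le_or_gt K (p 0) with hKs | hKs
    · by_cases hv0 : v 0 = true
      · have h1 := IHres K
        rw [hRlow v K hKs, hRlow u K hKs]
        have h2 : (if v 0 = true then 1 else 0) = 1 := by rw [if_pos hv0]
        have h3 : (if u 0 = true then 1 else 0) ≤ 1 := by split_ifs <;> omega
        omega
      · have hzero : (∑ j ∈ Finset.range (m+1), if p j < K ∧ v j = true then 1 else 0) = 0 := by
          refine Finset.sum_eq_zero fun j hj => ?_
          rw [if_neg]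
          rintro ⟨ha, hb⟩
          rcases Nat.eq_zero_or_pos j with rfl | hjpos
          · exact hv0 hb
          · exact hv0 (hup 0 j (by omega) (Finset.mem_range.1 hj) (by omega) hb)
        rw [hzero]
        omega
    · have h1 := IHres (K - 1)
      rw [hRhigh v K hKs, hRhigh u K hKs]
      omega

/-- boolean indicator of `t ≤ d j` on `[0,m)`. -/
def indB (d : Fin m → ℕ) (t : ℕ) : ℕ → Bool :=
  fun j => if h : j < m then decide (t ≤ d ⟨j, h⟩) else false

/-- `ℕ`-valued version of a permutation of `Fin m`. -/
def permN (π : Equiv.Perm (Fin m)) : ℕ → ℕ :=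
  fun j => if h : j < m then (π ⟨j, h⟩ : ℕ) else j

lemma indB_iff (d : Fin m → ℕ) (t : ℕ) (j : ℕ) (h : j < m) :
    indB d t j = true ↔ t ≤ d ⟨j, h⟩ := by simp [indB, h]

lemma permN_eq (π : Equiv.Perm (Fin m)) (j : ℕ) (h : j < m) :
    permN π j = (π ⟨j, h⟩ : ℕ) := by simp [permN, h]

lemma permN_lt (π : Equiv.Perm (Fin m)) (j : ℕ) (h : j < m) : permN π j < m := by
  rw [permN_eq π j h]; exact (π ⟨j, h⟩).isLt

lemma permN_inj (π : Equiv.Perm (Fin m)) {i j : ℕ} (hi : i < m) (hj : j < m)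
    (h : permN π i = permN π j) : i = j := by
  rw [permN_eq π i hi, permN_eq π j hj] at h
  have h2 := π.injective (Fin.ext h)
  simpa using congrArg Fin.val h2

lemma permN_comp (π : Equiv.Perm (Fin m)) (j : ℕ) (h : j < m) :
    permN π (permN π.symm j) = j := by
  rw [permN_eq π.symm j h, permN_eq π _ ((π.symm ⟨j, h⟩).isLt)]
  have h2 : (⟨((π.symm ⟨j, h⟩ : Fin m) : ℕ), (π.symm ⟨j, h⟩).isLt⟩ : Fin m) = π.symm ⟨j, h⟩ :=
    Fin.eta _ _
  rw [h2, Equiv.apply_symm_apply]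

lemma permN_comp' (π : Equiv.Perm (Fin m)) (j : ℕ) (h : j < m) :
    permN π.symm (permN π j) = j := by
  have := permN_comp π.symm j h
  rwa [Equiv.symm_symm] at this

lemma bridge_col (d : Fin m → ℕ) (w : ℕ → Bool) (t k : ℕ)
    (hw : ∀ (j : ℕ) (h : j < m), (w j = true ↔ t ≤ d ⟨j, h⟩)) :
    Nc d t k = ∑ j ∈ Finset.range m, if j < k ∧ w j = true then 1 else 0 := by
  unfold Nc
  rw [← Fin.sum_univ_eq_sum_range (fun j => if j < k ∧ w j = true then 1 else 0) m]
  refine Finset.sum_congr rfl fun j _ => ?_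
  have h2 := hw (j : ℕ) j.isLt
  rw [Fin.eta] at h2
  exact if_congr (and_congr_right fun _ => h2.symm) rfl rfl

lemma bridge_row (d : Fin m → ℕ) (π : Equiv.Perm (Fin m)) (w : ℕ → Bool) (t K : ℕ)
    (hw : ∀ (j : ℕ) (h : j < m), (w j = true ↔ t ≤ d ⟨j, h⟩)) :
    Nc (d ∘ π.symm) t K
      = ∑ j ∈ Finset.range m, if permN π j < K ∧ w j = true then 1 else 0 := by
  unfold Nc
  rw [← Fin.sum_univ_eq_sum_range (fun j => if permN π j < K ∧ w j = true then 1 else 0) m]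
  refine (Fintype.sum_equiv π
    (fun j : Fin m => if permN π (j : ℕ) < K ∧ w (j : ℕ) = true then 1 else 0)
    (fun i : Fin m => if (i : ℕ) < K ∧ t ≤ (d ∘ π.symm) i then 1 else 0) ?_).symm
  intro j
  have h2 := hw (j : ℕ) j.isLt
  rw [Fin.eta] at h2
  have h3 : permN π (j : ℕ) = ((π j : Fin m) : ℕ) := by
    rw [permN_eq π (j : ℕ) j.isLt, Fin.eta]
  refine if_congr ?_ rfl rfl
  rw [h3]
  show ((π j : Fin m) : ℕ) < K ∧ w (j : ℕ) = true ↔ ((π j : Fin m) : ℕ) < K ∧ t ≤ d (π.symm (π j))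
  rw [Equiv.symm_apply_apply]
  exact and_congr_right fun _ => h2

lemma count_split (mm : ℕ) (C : ℕ → Prop) [DecidablePred C] (w : ℕ → Bool) :
    (∑ j ∈ Finset.range mm, if C j ∧ w j = true then 1 else 0)
      + (∑ j ∈ Finset.range mm, if ¬ C j ∧ w j = true then 1 else 0)
    = ∑ j ∈ Finset.range mm, if w j = true then 1 else 0 := by
  rw [← Finset.sum_add_distrib]
  refine Finset.sum_congr rfl fun j _ => ?_
  by_cases h1 : C j <;> by_cases h2 : w j = true <;> simp [h1, h2]

lemma reindex_q (π : Equiv.Perm (Fin m)) (f G : ℕ → ℕ)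
    (h : ∀ j, j < m → f j = G (permN π.symm j)) :
    ∑ j ∈ Finset.range m, f j = ∑ i ∈ Finset.range m, G i := by
  refine Finset.sum_nbij' (fun j => permN π.symm j) (fun i => permN π i) ?_ ?_ ?_ ?_ ?_ <;>
    intro a ha
  · exact Finset.mem_range.2 (permN_lt π.symm a (Finset.mem_range.1 ha))
  · exact Finset.mem_range.2 (permN_lt π a (Finset.mem_range.1 ha))
  · exact permN_comp π a (Finset.mem_range.1 ha)
  · exact permN_comp' π a (Finset.mem_range.1 ha)
  · exact h a (Finset.mem_range.1 ha)

/-- Forward transfer: column domination implies row domination. -/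
lemma rows_of_cols (π : Equiv.Perm (Fin m)) (a b : Fin m → ℕ)
    (hB : ∀ j j' : Fin m, j ≤ j' → π j' ≤ π j → b j' ≤ b j)
    (hcols : ∀ t k, Nc b t k ≤ Nc a t k) :
    ∀ t K, Nc (b ∘ π.symm) t K ≤ Nc (a ∘ π.symm) t K := by
  intro t K
  have hmap : ∀ j, j < m → permN π j < m := fun j h => permN_lt π j h
  have hinj : ∀ i j, i < m → j < m → permN π i = permN π j → i = j :=
    fun i j hi hj h => permN_inj π hi hj h
  have hup : ∀ i j, i ≤ j → j < m → permN π j ≤ permN π i →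
      indB b t j = true → indB b t i = true := by
    intro i j hij hj hpe hv
    have hi : i < m := lt_of_le_of_lt hij hj
    rw [indB_iff b t j hj] at hv
    rw [indB_iff b t i hi]
    refine le_trans hv (hB ⟨i, hi⟩ ⟨j, hj⟩ hij ?_)
    rw [permN_eq π j hj, permN_eq π i hi] at hpe
    exact hpe
  have hcolN : ∀ k, (∑ j ∈ Finset.range m, if j < k ∧ indB b t j = true then 1 else 0)
      ≤ (∑ j ∈ Finset.range m, if j < k ∧ indB a t j = true then 1 else 0) + 0 := by
    intro k
    rw [← bridge_col b (indB b t) t k (indB_iff b t),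
      ← bridge_col a (indB a t) t k (indB_iff a t), add_zero]
    exact hcols t k
  have h := core m (permN π) (indB a t) (indB b t) 0 hmap hinj hup hcolN K
  rw [bridge_row a π (indB a t) t K (indB_iff a t),
    bridge_row b π (indB b t) t K (indB_iff b t)]
  omega

/-- Backward transfer: row domination implies column domination. -/
lemma cols_of_rows (π : Equiv.Perm (Fin m)) (a b : Fin m → ℕ)
    (hA : ∀ j j' : Fin m, j ≤ j' → π j' ≤ π j → a j' ≤ a j)
    (htot : ∀ t, Nc b t m = Nc a t m)
    (hrows : ∀ t K, Nc (b ∘ π.symm) t K ≤ Nc (a ∘ π.symm) t K) :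
    ∀ t k, Nc b t k ≤ Nc a t k := by
  intro t k
  rcases le_or_gt m k with hk | hk
  · rw [Nc_stable b t k hk, Nc_stable a t k hk, htot t]
  have hm1 : 1 ≤ m := by omega
  -- totals in ℕ world
  have hTot : ∀ (d : Fin m → ℕ), Nc d t m
      = ∑ j ∈ Finset.range m, if indB d t j = true then 1 else 0 := by
    intro d
    rw [bridge_col d (indB d t) t m (indB_iff d t)]
    exact Finset.sum_congr rfl fun j hj =>
      if_congr (and_iff_right (Finset.mem_range.1 hj)) rfl rfl
  have hT : (∑ j ∈ Finset.range m, if indB b t j = true then 1 else 0)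
      = ∑ j ∈ Finset.range m, if indB a t j = true then 1 else 0 := by
    rw [← hTot b, ← hTot a, htot t]
  -- rows in ℕ world
  have hRN : ∀ K, (∑ j ∈ Finset.range m, if permN π j < K ∧ indB b t j = true then 1 else 0)
      ≤ ∑ j ∈ Finset.range m, if permN π j < K ∧ indB a t j = true then 1 else 0 := by
    intro K
    have h := hrows t K
    rw [bridge_row a π (indB a t) t K (indB_iff a t),
      bridge_row b π (indB b t) t K (indB_iff b t)] at h
    exact h
  -- hat-instance identities
  have hIcol : ∀ (w : ℕ → Bool) (k' : ℕ),
      (∑ i ∈ Finset.range m, if i < k' ∧ w (permN π.symm (m - 1 - i)) = true then 1 else 0)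
        + (∑ j ∈ Finset.range m, if permN π j < m - k' ∧ w j = true then 1 else 0)
      = ∑ j ∈ Finset.range m, if w j = true then 1 else 0 := by
    intro w k'
    have h1 : (∑ i ∈ Finset.range m, if i < k' ∧ w (permN π.symm (m - 1 - i)) = true then 1 else 0)
        = ∑ j ∈ Finset.range m, if ¬ (permN π j < m - k') ∧ w j = true then 1 else 0 := by
      have h2 : (∑ i ∈ Finset.range m,
            if i < k' ∧ w (permN π.symm (m - 1 - i)) = true then 1 else 0)
          = ∑ i ∈ Finset.range m, (fun j =>
              if m - 1 - j < k' ∧ w (permN π.symm j) = true then 1 else 0) (m - 1 - i) := by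
        refine Finset.sum_congr rfl fun i hi => ?_
        have him := Finset.mem_range.1 hi
        exact if_congr (by constructor <;> rintro ⟨h3, h4⟩ <;> exact ⟨by omega, h4⟩) rfl rfl
      rw [h2, Finset.sum_range_reflect
        (fun j => if m - 1 - j < k' ∧ w (permN π.symm j) = true then 1 else 0) m]
      refine reindex_q π _ (fun x => if ¬ (permN π x < m - k') ∧ w x = true then 1 else 0) ?_
      intro j hj
      have hq := permN_lt π.symm j hj
      have hpq := permN_comp π j hj
      refine if_congr ?_ rfl rfl
      rw [hpq]
      constructor <;> rintro ⟨h3, h4⟩ <;> exact ⟨by omega, h4⟩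
    rw [h1, add_comm]
    exact count_split m (fun j => permN π j < m - k') w
  have hIrow : ∀ (w : ℕ → Bool) (K : ℕ),
      (∑ i ∈ Finset.range m, if (if i < m then m - 1 - permN π.symm (m - 1 - i) else i) < K
            ∧ w (permN π.symm (m - 1 - i)) = true then 1 else 0)
        + (∑ j ∈ Finset.range m, if j < m - K ∧ w j = true then 1 else 0)
      = ∑ j ∈ Finset.range m, if w j = true then 1 else 0 := by
    intro w K
    have h1 : (∑ i ∈ Finset.range m, if (if i < m then m - 1 - permN π.symm (m - 1 - i) else i) < K
            ∧ w (permN π.symm (m - 1 - i)) = true then 1 else 0)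
        = ∑ j ∈ Finset.range m, if ¬ (j < m - K) ∧ w j = true then 1 else 0 := by
      have h2 : (∑ i ∈ Finset.range m, if (if i < m then m - 1 - permN π.symm (m - 1 - i) else i) < K
            ∧ w (permN π.symm (m - 1 - i)) = true then 1 else 0)
          = ∑ i ∈ Finset.range m, (fun j =>
              if m - 1 - permN π.symm j < K ∧ w (permN π.symm j) = true then 1 else 0)
              (m - 1 - i) := by
        refine Finset.sum_congr rfl fun i hi => ?_
        have him := Finset.mem_range.1 hi
        rw [if_pos him]
      rw [h2, Finset.sum_range_reflect
        (fun j => if m - 1 - permN π.symm j < K ∧ w (permN π.symm j) = true then 1 else 0) m]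
      refine reindex_q π _ (fun x => if ¬ (x < m - K) ∧ w x = true then 1 else 0) ?_
      intro j hj
      have hq := permN_lt π.symm j hj
      refine if_congr ?_ rfl rfl
      constructor <;> rintro ⟨h3, h4⟩ <;> exact ⟨by omega, h4⟩
    rw [h1, add_comm]
    exact count_split m (fun j => j < m - K) w
  -- CORE instance
  have hmap : ∀ i, i < m → (if i < m then m - 1 - permN π.symm (m - 1 - i) else i) < m := by
    intro i hi
    rw [if_pos hi]
    omega
  have hinj : ∀ i j, i < m → j < m →
      (if i < m then m - 1 - permN π.symm (m - 1 - i) else i)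
        = (if j < m then m - 1 - permN π.symm (m - 1 - j) else j) → i = j := by
    intro i j hi hj h
    rw [if_pos hi, if_pos hj] at h
    have h1 := permN_lt π.symm (m - 1 - i) (by omega)
    have h2 := permN_lt π.symm (m - 1 - j) (by omega)
    have h3 : permN π.symm (m - 1 - i) = permN π.symm (m - 1 - j) := by omega
    have h4 := permN_inj π.symm (by omega : m - 1 - i < m) (by omega : m - 1 - j < m) h3
    omega
  have hup : ∀ i j, i ≤ j → j < m →
      (if j < m then m - 1 - permN π.symm (m - 1 - j) else j)
        ≤ (if i < m then m - 1 - permN π.symm (m - 1 - i) else i) →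
      indB a t (permN π.symm (m - 1 - j)) = true →
      indB a t (permN π.symm (m - 1 - i)) = true := by
    intro i j hij hj hpe hv
    have hi : i < m := lt_of_le_of_lt hij hj
    rw [if_pos hi, if_pos hj] at hpe
    have hY : permN π.symm (m - 1 - j) < m := permN_lt π.symm _ (by omega)
    have hX : permN π.symm (m - 1 - i) < m := permN_lt π.symm _ (by omega)
    rw [indB_iff a t _ hY] at hv
    rw [indB_iff a t _ hX]
    have hXY : permN π.symm (m - 1 - i) ≤ permN π.symm (m - 1 - j) := by omega
    refine le_trans hv (hA ⟨_, hX⟩ ⟨_, hY⟩ hXY ?_)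
    have hYeq : (⟨permN π.symm (m - 1 - j), hY⟩ : Fin m) = π.symm ⟨m - 1 - j, by omega⟩ :=
      Fin.ext (permN_eq π.symm (m - 1 - j) (by omega : m - 1 - j < m))
    have hXeq : (⟨permN π.symm (m - 1 - i), hX⟩ : Fin m) = π.symm ⟨m - 1 - i, by omega⟩ :=
      Fin.ext (permN_eq π.symm (m - 1 - i) (by omega : m - 1 - i < m))
    rw [hYeq, hXeq, Equiv.apply_symm_apply, Equiv.apply_symm_apply]
    show m - 1 - j ≤ m - 1 - i
    omega
  have hcolhyp : ∀ k', (∑ i ∈ Finset.range m,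
        if i < k' ∧ indB a t (permN π.symm (m - 1 - i)) = true then 1 else 0)
      ≤ (∑ i ∈ Finset.range m,
        if i < k' ∧ indB b t (permN π.symm (m - 1 - i)) = true then 1 else 0) + 0 := by
    intro k'
    have e1 := hIcol (indB a t) k'
    have e2 := hIcol (indB b t) k'
    have e3 := hRN (m - k')
    omega
  have hcore := core m (fun i => if i < m then m - 1 - permN π.symm (m - 1 - i) else i)
    (fun i => indB b t (permN π.symm (m - 1 - i)))
    (fun i => indB a t (permN π.symm (m - 1 - i)))
    0 hmap hinj hup hcolhyp (m - k)
  have e1 := hIrow (indB a t) (m - k)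
  have e2 := hIrow (indB b t) (m - k)
  have hmk : m - (m - k) = k := by omega
  rw [hmk] at e1 e2
  rw [bridge_col b (indB b t) t k (indB_iff b t), bridge_col a (indB a t) t k (indB_iff a t)]
  omega

end Stmt17


/-- Bruhat comparison of horizontal weights is equivalent to Bruhat comparison of
vertical weights of DL-dense arrays.  The poset of staircase corners (one corner in
each row and each column, since `m = n_m = #Sc`) is encoded by the permutation `π`
sending the column of a corner to its row; the order on corners is
`(π j, j) ⪰ (π j', j') ↔ π j ≥ π j' ∧ j ≤ j'`.  The hypotheses `hvrtcons` and
`hhorcons` express that the column map is a consistent anti-linearization and the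
row map a consistent linearization of this arborescent poset.  A DL-dense array with
nonzero-entry multiset `λ` is encoded by its vector of corner values per column
(`a`, resp. `b`, monotone for the corner order); its vertical weight is this vector
and its horizontal weight is the corresponding vector indexed by rows, i.e.
`a ∘ π.symm`. -/
theorem stmt_17 {m : ℕ} (π : Equiv.Perm (Fin m))
    (hvrtcons : ∀ j j' j'' : Fin m, j < j' → j' < j'' → π j'' ≤ π j → π j'' ≤ π j')
    (hhorcons : ∀ j j' j'' : Fin m, π j < π j' → π j' < π j'' → j'' ≤ j → j'' ≤ j')
    (a b : Fin m → ℕ)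
    (hA : ∀ j j' : Fin m, j ≤ j' → π j' ≤ π j → a j' ≤ a j)
    (hB : ∀ j j' : Fin m, j ≤ j' → π j' ≤ π j → b j' ≤ b j)
    (horb : ∃ τ : Equiv.Perm (Fin m), b = a ∘ τ) :
    BruhatLE (a ∘ π.symm) (b ∘ π.symm) ↔ BruhatLE a b := by
  obtain ⟨τ, hτ⟩ := horb
  constructor
  · intro h
    have hrowsN := Stmt17.bruhatLE_nc h
    have htot : ∀ t, Stmt17.Nc b t m = Stmt17.Nc a t m :=
      fun t => Stmt17.Nc_total τ hτ t
    have hcols := Stmt17.cols_of_rows π a b hA htot (fun t K => hrowsN t K)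
    exact Stmt17.nc_bruhatLE ⟨τ, hτ⟩ hcols
  · intro h
    have hcolsN := Stmt17.bruhatLE_nc h
    have hrows := Stmt17.rows_of_cols π a b hB (fun t k => hcolsN t k)
    refine Stmt17.nc_bruhatLE ⟨(π.symm.trans τ).trans π, ?_⟩ hrows
    funext j
    simp [hτ, Function.comp]
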